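/- If U_1 ~ Geometric(p) and S_0 ~ Poisson(v), then E[Y] = v(1 - G_v(q)), where G_v is the probability generating function of T and q = 1 - p. -/

import Mathlib

open MeasureTheory ProbabilityTheory
open scoped ENNReal NNReal

lemma poisson_real_tsum (l : ℝ) :
    ∑' m : ℕ, (m : ℝ) * (Real.exp (-l) * l ^ m / m.factorial) = l := by
  set f : ℕ → ℝ := fun m => (m : ℝ) * (Real.exp (-l) * l ^ m / m.factorial) with hf
  have hshift : ∀ m : ℕ, f (m + 1) = (Real.exp (-l) * l) * (l ^ m / m.factorial) := by
    intro m
    have : ((m + 1 : ℕ) : ℝ) ≠ 0 := by positivity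
    field_simp [hf, Nat.factorial_succ, pow_succ]
    simp only [hf, Nat.add_comm 1 m, Nat.factorial_succ]; push_cast; field_simp; ring
  have hs1 : Summable (fun m => f (m + 1)) := by
    simp only [hshift]
    exact (Real.summable_pow_div_factorial l).mul_left _
  have hs : Summable f := (summable_nat_add_iff 1).mp hs1
  have hexp : ∑' m : ℕ, l ^ m / (m.factorial : ℝ) = Real.exp l := by
    rw [Real.exp_eq_exp_ℝ, NormedSpace.exp_eq_tsum_div]
  calc ∑' m, f m = f 0 + ∑' m, f (m + 1) := hs.tsum_eq_zero_add
    _ = (Real.exp (-l) * l) * ∑' m : ℕ, l ^ m / m.factorial := by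
        rw [show f 0 = 0 by simp [hf], zero_add, tsum_congr hshift, tsum_mul_left]
    _ = l := by rw [hexp, Real.exp_neg]; field_simp

lemma poisson_summable (l : ℝ) :
    Summable (fun m : ℕ => (m : ℝ) * (Real.exp (-l) * l ^ m / m.factorial)) := by
  apply (summable_nat_add_iff 1).mp
  have h : ∀ m : ℕ, ((m+1 : ℕ) : ℝ) * (Real.exp (-l) * l ^ (m+1) / (m+1).factorial)
      = (Real.exp (-l) * l) * (l ^ m / m.factorial) := by
    intro m
    have : ((m + 1 : ℕ) : ℝ) ≠ 0 := by positivity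
    field_simp [Nat.factorial_succ, pow_succ]
    simp only [Nat.add_comm 1 m, Nat.factorial_succ]; push_cast; ring
  simp only [h]
  exact (Real.summable_pow_div_factorial l).mul_left _

lemma poisson_mean (l : ℝ) (hl : 0 ≤ l) :
    ∑' m : ℕ, (m : ℝ≥0∞) * ENNReal.ofReal (Real.exp (-l) * l ^ m / m.factorial)
      = ENNReal.ofReal l := by
  have hnn : ∀ m : ℕ, 0 ≤ (m : ℝ) * (Real.exp (-l) * l ^ m / m.factorial) := by
    intro m
    have h1 : (0:ℝ) ≤ Real.exp (-l) := (Real.exp_pos _).le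
    have h2 : (0:ℝ) ≤ l ^ m := pow_nonneg hl m
    positivity
  calc ∑' m : ℕ, (m : ℝ≥0∞) * ENNReal.ofReal (Real.exp (-l) * l ^ m / m.factorial)
      = ∑' m : ℕ, ENNReal.ofReal ((m : ℝ) * (Real.exp (-l) * l ^ m / m.factorial)) := by
        congr 1; funext m
        rw [ENNReal.ofReal_mul (by positivity), ENNReal.ofReal_natCast]
    _ = ENNReal.ofReal (∑' m : ℕ, (m : ℝ) * (Real.exp (-l) * l ^ m / m.factorial)) :=
        (ENNReal.ofReal_tsum_of_nonneg hnn (poisson_summable l)).symm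
    _ = ENNReal.ofReal l := by rw [poisson_real_tsum l]

/-- **Expected total yield, geometric case.** If `U₁ ~ Geometric(p)` (so
`π n = p q^{n-1}`, `q = 1 - p`) and `S₀ ~ Poisson(v)` — equivalently the `X n` are
independent with `X n ~ Poisson(p q^{n-1} v)` — and `T = min {n ≥ 1 : X n = 0}`,
`Y = X 1 + ⋯ + X (T-1)`, then `E[Y] = v (1 - G_v(q))` where `G_v(z) = E[z^T]`. -/
theorem expected_yield_geometric_poisson
    {Ω : Type*} [MeasurableSpace Ω] (μ : Measure Ω) [IsProbabilityMeasure μ]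
    (p : ℝ) (hp : 0 < p ∧ p < 1) (q : ℝ) (hq : q = 1 - p)
    (v : ℝ) (hv : 0 < v)
    (X : ℕ → Ω → ℕ) (hXm : ∀ n, Measurable (X n))
    (hindep : iIndepFun (fun n : ℕ => X (n + 1)) μ)
    (hX : ∀ n, 1 ≤ n → ∀ m : ℕ, μ {ω | X n ω = m}
        = ENNReal.ofReal (Real.exp (-(p * q ^ (n - 1) * v)) * (p * q ^ (n - 1) * v) ^ m
            / m.factorial))
    (T : Ω → ℕ) (hT : ∀ ω, T ω = sInf {n | 1 ≤ n ∧ X n ω = 0})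
    (hTfin : ∀ᵐ ω ∂μ, ∃ n, 1 ≤ n ∧ X n ω = 0)
    (Y : Ω → ℕ) (hY : ∀ ω, Y ω = ∑ n ∈ Finset.Ico 1 (T ω), X n ω) :
    ∫⁻ ω, (Y ω : ℝ≥0∞) ∂μ
      = ENNReal.ofReal (v * (1 - ∫ ω, q ^ (T ω) ∂μ)) := by
  obtain ⟨hp0, hp1⟩ := hp
  have hq0 : 0 < q := by rw [hq]; linarith
  have hq1 : q < 1 := by rw [hq]; linarith
  set c : ℕ → ℝ := fun n => p * q ^ n * v with hc
  have hcpos : ∀ n, 0 < c n := fun n => by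
    have : 0 < q ^ n := pow_pos hq0 n
    simp only [hc]; positivity
  have hlaw : ∀ n m : ℕ, μ {ω | X (n+1) ω = m}
      = ENNReal.ofReal (Real.exp (-(c n)) * (c n) ^ m / m.factorial) := by
    intro n m
    have := hX (n+1) (Nat.le_add_left 1 n) m
    simpa [Nat.add_sub_cancel, hc] using this
  -- the sets B n = {X 1 ≠ 0, ..., X n ≠ 0}
  set B : ℕ → Set Ω := fun n => {ω | ∀ k < n, X (k+1) ω ≠ 0} with hB
  have hBmeas : ∀ n, MeasurableSet (B n) := by
    intro n
    have hEq : B n = ⋂ k ∈ Finset.range n, {ω | X (k+1) ω ≠ 0} := by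
      ext ω; simp [hB]
    rw [hEq]
    refine Finset.measurableSet_biInter _ fun k _ => ?_
    exact (hXm (k+1) (measurableSet_singleton 0)).compl
  -- key characterization
  have key : ∀ ω, (∃ m, 1 ≤ m ∧ X m ω = 0) → ∀ n : ℕ, (n + 1 ≤ T ω ↔ ω ∈ B n) := by
    intro ω hω n
    have hne : {m | 1 ≤ m ∧ X m ω = 0}.Nonempty := hω
    constructor
    · intro h k hk hX0
      have hmem : k + 1 ∈ {m | 1 ≤ m ∧ X m ω = 0} := ⟨Nat.le_add_left 1 k, hX0⟩
      have h2 := Nat.sInf_le hmem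
      rw [← hT ω] at h2
      omega
    · intro hωB
      have hmem := Nat.sInf_mem hne
      rw [← hT ω] at hmem
      obtain ⟨h1, h0⟩ := hmem
      by_contra h
      push_neg at h
      have hk : T ω - 1 < n := by omega
      have h3 := hωB _ hk
      have h4 : T ω - 1 + 1 = T ω := by omega
      rw [h4] at h3
      exact h3 h0
  -- measurability of T
  have hTset : ∀ n : ℕ, {ω | n + 1 ≤ T ω} = B n ∩ {ω | ∃ m, 1 ≤ m ∧ X m ω = 0} := by
    intro n; ext ω
    simp only [Set.mem_setOf_eq, Set.mem_inter_iff]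
    constructor
    · intro h
      have hne : ∃ m, 1 ≤ m ∧ X m ω = 0 := by
        by_contra hempty
        push_neg at hempty
        have hemp : {m | 1 ≤ m ∧ X m ω = 0} = ∅ := by
          ext m; simp only [Set.mem_setOf_eq, Set.mem_empty_iff_false, iff_false]
          rintro ⟨h1, h2⟩; exact hempty m h1 h2
        have := hT ω
        rw [hemp, Nat.sInf_empty] at this
        omega
      exact ⟨(key ω hne n).mp h, hne⟩
    · rintro ⟨hb, hne⟩; exact (key ω hne n).mpr hb
  have hEx : MeasurableSet {ω | ∃ m, 1 ≤ m ∧ X m ω = 0} := by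
    have hEq : {ω | ∃ m, 1 ≤ m ∧ X m ω = 0} = ⋃ m, ⋃ _ : 1 ≤ m, {ω | X m ω = 0} := by
      ext ω; simp
    rw [hEq]
    exact MeasurableSet.iUnion fun m => MeasurableSet.iUnion fun _ =>
      hXm m (measurableSet_singleton 0)
  have hle : ∀ n : ℕ, MeasurableSet {ω | n + 1 ≤ T ω} := fun n => by
    rw [hTset n]; exact (hBmeas n).inter hEx
  have hTmeas : Measurable T := by
    apply measurable_to_countable'
    intro y
    match y with
    | 0 =>
      have hEq : T ⁻¹' {0} = {ω | 0 + 1 ≤ T ω}ᶜ := by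
        ext ω; simp only [Set.mem_preimage, Set.mem_singleton_iff, Set.mem_compl_iff,
          Set.mem_setOf_eq]; omega
      rw [hEq]; exact (hle 0).compl
    | (k+1) =>
      have hEq : T ⁻¹' {k+1} = {ω | k + 1 ≤ T ω} ∩ {ω | k + 1 + 1 ≤ T ω}ᶜ := by
        ext ω; simp only [Set.mem_preimage, Set.mem_singleton_iff, Set.mem_inter_iff,
          Set.mem_compl_iff, Set.mem_setOf_eq]; omega
      rw [hEq]
      exact (hle k).inter (hle (k+1)).compl
  -- LHS
  set g : ℕ → Ω → ℝ≥0∞ := fun n ω => (X (n+1) ω : ℝ≥0∞) * (B (n+1)).indicator 1 ω with hg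
  have hgmeas : ∀ n, Measurable (g n) := fun n =>
    (measurable_from_nat.comp (hXm (n+1))).mul (measurable_one.indicator (hBmeas (n+1)))
  have hYae : ∀ᵐ ω ∂μ, (Y ω : ℝ≥0∞) = ∑' n, g n ω := by
    filter_upwards [hTfin] with ω hω
    have hkey := key ω hω
    have ht1 : 1 ≤ T ω := (hkey 0).mpr (fun k hk => absurd hk (Nat.not_lt_zero k))
    have hsum : ∑' n, g n ω = ∑ n ∈ Finset.range (T ω - 1), (X (n+1) ω : ℝ≥0∞) := by
      rw [tsum_eq_sum (s := Finset.range (T ω - 1))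
        (fun n hn => by
          have hn' : ¬ n < T ω - 1 := fun h => hn (Finset.mem_range.mpr h)
          have hmem : ω ∉ B (n+1) := fun hmem => by
            have := (hkey (n+1)).mpr hmem; omega
          simp [hg, Set.indicator_of_notMem hmem])]
      refine Finset.sum_congr rfl fun n hn => ?_
      have hn' : n < T ω - 1 := Finset.mem_range.mp hn
      have hmem : ω ∈ B (n+1) := (hkey (n+1)).mp (by omega)
      simp [hg, Set.indicator_of_mem hmem]
    rw [hsum, hY ω, Nat.cast_sum, Finset.sum_Ico_eq_sum_range]
    exact Finset.sum_congr rfl fun j _ => by rw [Nat.add_comm]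
  -- Poisson mean
  have hmean : ∀ n, ∫⁻ ω, (X (n+1) ω : ℝ≥0∞) ∂μ = ENNReal.ofReal (c n) := by
    intro n
    have hmap : ∫⁻ ω, (X (n+1) ω : ℝ≥0∞) ∂μ = ∫⁻ m, (m : ℝ≥0∞) ∂(μ.map (X (n+1))) :=
      (lintegral_map measurable_from_nat (hXm (n+1))).symm
    rw [hmap, lintegral_countable']
    have hsing : ∀ m : ℕ, (μ.map (X (n+1))) {m} = μ {ω | X (n+1) ω = m} := by
      intro m
      rw [Measure.map_apply (hXm (n+1)) (measurableSet_singleton m)]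
      rfl
    simp_rw [hsing, hlaw]
    exact poisson_mean (c n) (hcpos n).le
  -- independence step
  have hgint : ∀ n, ∫⁻ ω, g n ω ∂μ = ENNReal.ofReal (c n) * μ (B n) := by
    intro n
    set G : ℕ → ℕ → ℝ≥0∞ :=
      fun i => if i = n then (Nat.cast : ℕ → ℝ≥0∞) else (fun m => if m = 0 then 0 else 1)
      with hG
    have hGmeas : ∀ i, Measurable (G i) := fun i => measurable_from_nat
    have hFindep : iIndepFun (fun i => G i ∘ (X (i+1))) μ :=
      hindep.comp G hGmeas
    have hFmeas : ∀ i, Measurable (G i ∘ (X (i+1))) := fun i => (hGmeas i).comp (hXm (i+1))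
    have hIF : IndepFun (∏ j ∈ Finset.range n, (G j ∘ X (j+1))) (G n ∘ X (n+1)) μ :=
      hFindep.indepFun_finset_prod_of_notMem hFmeas Finset.notMem_range_self
    have hprod : (∏ j ∈ Finset.range n, (G j ∘ X (j+1))) = (B n).indicator 1 := by
      funext ω
      rw [Finset.prod_apply]
      by_cases hm : ω ∈ B n
      · rw [Set.indicator_of_mem hm]
        refine Finset.prod_eq_one fun j hj => ?_
        have hjn : j ≠ n := Nat.ne_of_lt (Finset.mem_range.mp hj)
        have hx := hm j (Finset.mem_range.mp hj)
        simp [hG, hjn, Function.comp, hx]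
      · rw [Set.indicator_of_notMem hm]
        simp only [hB, Set.mem_setOf_eq] at hm
        push_neg at hm
        obtain ⟨k, hk, hk0⟩ := hm
        refine Finset.prod_eq_zero (Finset.mem_range.mpr hk) ?_
        have hkn : k ≠ n := Nat.ne_of_lt hk
        simp [hG, hkn, Function.comp, hk0]
    have hGn : (G n ∘ X (n+1)) = fun ω => (X (n+1) ω : ℝ≥0∞) := by
      funext ω; simp [hG]
    have hpt : ∀ ω, g n ω = ((∏ j ∈ Finset.range n, (G j ∘ X (j+1))) * (G n ∘ X (n+1))) ω := by
      intro ω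
      rw [hprod, hGn]
      simp only [Pi.mul_apply]
      rcases eq_or_ne (X (n+1) ω) 0 with h0 | h0
      · simp [hg, h0]
      · have hiff : ω ∈ B (n+1) ↔ ω ∈ B n := by
          constructor
          · intro h k hk; exact h k (by omega)
          · intro h k hk
            rcases Nat.lt_or_ge k n with h' | h'
            · exact h k h'
            · have hkn : k = n := by omega
              rw [hkn]; exact h0
        by_cases hm : ω ∈ B n
        · rw [hg]
          simp only []
          rw [Set.indicator_of_mem (hiff.mpr hm), Set.indicator_of_mem hm]
          ring
        · rw [hg]
          simp only []
          rw [Set.indicator_of_notMem (fun h => hm (hiff.mp h)),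
            Set.indicator_of_notMem hm]
          ring
    calc ∫⁻ ω, g n ω ∂μ
        = ∫⁻ ω, ((∏ j ∈ Finset.range n, (G j ∘ X (j+1))) * (G n ∘ X (n+1))) ω ∂μ :=
          lintegral_congr hpt
      _ = (∫⁻ ω, (∏ j ∈ Finset.range n, (G j ∘ X (j+1))) ω ∂μ)
            * ∫⁻ ω, (G n ∘ X (n+1)) ω ∂μ :=
          lintegral_mul_eq_lintegral_mul_lintegral_of_indepFun
            (hprod ▸ (measurable_one.indicator (hBmeas n))) (hFmeas n) hIF
      _ = μ (B n) * ENNReal.ofReal (c n) := by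
          rw [hprod, hGn, hmean n]
          congr 1
          exact lintegral_indicator_one (hBmeas n)
      _ = ENNReal.ofReal (c n) * μ (B n) := mul_comm _ _
  have hLHS : ∫⁻ ω, (Y ω : ℝ≥0∞) ∂μ = ∑' n, ENNReal.ofReal (c n) * μ (B n) := by
    rw [lintegral_congr_ae hYae, lintegral_tsum (fun n => (hgmeas n).aemeasurable)]
    exact tsum_congr hgint
  -- RHS
  have hqTmeas : Measurable fun ω => q ^ T ω :=
    (measurable_from_nat (f := fun n : ℕ => q ^ n)).comp hTmeas
  have hqTle : ∀ ω, q ^ T ω ≤ 1 := fun ω => pow_le_one₀ hq0.le hq1.le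
  have hqTint : Integrable (fun ω => q ^ T ω) μ := by
    refine Integrable.mono' (integrable_const (1:ℝ)) hqTmeas.aestronglyMeasurable ?_
    filter_upwards with ω
    rw [Real.norm_eq_abs, abs_of_nonneg (pow_nonneg hq0.le _)]
    exact hqTle ω
  have hstep : v * (1 - ∫ ω, q ^ T ω ∂μ) = ∫ ω, v * (1 - q ^ T ω) ∂μ := by
    rw [integral_const_mul, integral_sub (integrable_const 1) hqTint, integral_const]
    simp
  have hint2 : Integrable (fun ω => v * (1 - q ^ T ω)) μ :=
    (((integrable_const (1:ℝ)).sub hqTint).const_mul v)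
  have hofReal : ENNReal.ofReal (v * (1 - ∫ ω, q ^ T ω ∂μ))
      = ∫⁻ ω, ENNReal.ofReal (v * (1 - q ^ T ω)) ∂μ := by
    rw [hstep]
    refine ofReal_integral_eq_lintegral_ofReal hint2 ?_
    filter_upwards with ω
    have := hqTle ω
    have : 0 ≤ 1 - q ^ T ω := by linarith
    positivity
  have hptwise : ∀ ω, ENNReal.ofReal (v * (1 - q ^ T ω))
      = ∑' n, Set.indicator {ω' | n + 1 ≤ T ω'} (fun _ => ENNReal.ofReal (c n)) ω := by
    intro ω
    have hgeom : ∑ n ∈ Finset.range (T ω), c n = v * (1 - q ^ T ω) := by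
      have hq1' : q ≠ 1 := ne_of_lt hq1
      have hsum : ∑ n ∈ Finset.range (T ω), c n = (p*v) * ∑ n ∈ Finset.range (T ω), q ^ n := by
        rw [Finset.mul_sum]
        exact Finset.sum_congr rfl fun n _ => by rw [hc]; ring
      have hne : q - 1 ≠ 0 := by intro h; exact hq1' (by linarith)
      rw [hsum, geom_sum_eq hq1', hq, show (1 - p : ℝ) - 1 = -p by ring]
      field_simp [hp0.ne']
      ring
    calc ENNReal.ofReal (v * (1 - q ^ T ω))
        = ENNReal.ofReal (∑ n ∈ Finset.range (T ω), c n) := by rw [hgeom]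
      _ = ∑ n ∈ Finset.range (T ω), ENNReal.ofReal (c n) :=
          ENNReal.ofReal_sum_of_nonneg fun n _ => (hcpos n).le
      _ = ∑' n, Set.indicator {ω' | n + 1 ≤ T ω'} (fun _ => ENNReal.ofReal (c n)) ω := by
          rw [tsum_eq_sum (s := Finset.range (T ω))
            (fun n hn => by
              have hn' : ¬ n < T ω := fun h => hn (Finset.mem_range.mpr h)
              have : ω ∉ {ω' | n + 1 ≤ T ω'} := by
                simp only [Set.mem_setOf_eq]; omega
              rw [Set.indicator_of_notMem this])]
          refine Finset.sum_congr rfl fun n hn => ?_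
          have : ω ∈ {ω' | n + 1 ≤ T ω'} := by
            simp only [Set.mem_setOf_eq]
            exact Finset.mem_range.mp hn
          rw [Set.indicator_of_mem this]
  have hRHS : ∫⁻ ω, ENNReal.ofReal (v * (1 - q ^ T ω)) ∂μ
      = ∑' n, ENNReal.ofReal (c n) * μ {ω | n + 1 ≤ T ω} := by
    rw [lintegral_congr hptwise,
      lintegral_tsum (fun n => (measurable_const.indicator (hle n)).aemeasurable)]
    exact tsum_congr fun n => lintegral_indicator_const (hle n) _
  have hBT : ∀ n, μ {ω | n + 1 ≤ T ω} = μ (B n) := by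
    intro n
    apply measure_congr
    rw [Filter.eventuallyEq_set]
    filter_upwards [hTfin] with ω hω
    exact key ω hω n
  rw [hLHS, hofReal, hRHS]
  exact tsum_congr fun n => by rw [hBT n]
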